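/- Let τ > ν−1, γ ∈ (0,1), λ ≥ 1, β ∈ ℝ, θ < 1 with λ^{θ−1}γ^{−1} ≤ 1. Let μ_∞(j;ω) = iβ j₁/|j|² + z_∞(j;ω), j ∈ ℤ²∖{0}, with sup_ω |z_∞(j;ω)| ≤ C λ^θ |j|^{−1} and |z_∞(j;ω₁) − z_∞(j;ω₂)| ≤ C λ^θ γ^{−1} |j|^{−1} |ω₁−ω₂|, and define Λ_∞^γ := {ω ∈ DC(2γ,τ) : |iλ ω·ℓ + μ_∞(j;ω)| ≥ 2λγ ⟨ℓ⟩^{−τ} for all ℓ ∈ ℤ^ν, j ∈ ℤ²∖{0} with π^⊤(ℓ)+j = 0}. For ω ∈ Λ_∞^γ define (L_∞^{−1}h)(φ,x) := Σ_{ℓ∈ℤ^ν∖{0}, j∈ℤ²∖{0}, π^⊤(ℓ)+j=0} (iλ ω·ℓ + μ_∞(j;ω))^{−1} ĥ(ℓ,j) e^{i(ℓ·φ+j·x)} for quasi-periodic traveling waves h with zero average in x. Then L_∞^{−1}h is a quasi-periodic traveling wave, (λ ω·∂_φ + D_∞)(L_∞^{−1}h) = h where D_∞ := diag_{j≠0}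 μ_∞(j), and for every s ≥ 0: ‖L_∞^{−1}h‖_s ≤ C' λ^{−1} γ^{−1} ‖h‖_{s+τ} for each fixed ω ∈ Λ_∞^γ, and for families h(·;ω), ‖L_∞^{−1}h‖_s^{Lip(γ)} ≤ C' λ^{−1} γ^{−1} ‖h‖_{s+2τ+1}^{Lip(γ)}. -/

import Mathlib

open scoped ENNReal NNReal BigOperators Classical
open MeasureTheory

namespace BetaPlane

abbrev Zn (n : ℕ) := Fin n → ℤ
abbrev Z2 := Fin 2 → ℤ
abbrev Idx (ν : ℕ) := Zn ν × Z2

/-- Euclidean norm of an integer vector. -/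
noncomputable def znorm {n : ℕ} (ℓ : Fin n → ℤ) : ℝ :=
  Real.sqrt (∑ i, ((ℓ i : ℝ)) ^ 2)

/-- Euclidean norm of a real vector. -/
noncomputable def rnorm {n : ℕ} (ω : Fin n → ℝ) : ℝ :=
  Real.sqrt (∑ i, (ω i) ^ 2)

/-- `⟨ℓ,j⟩ := max {1, |ℓ|, |j|}`. -/
noncomputable def wt {ν : ℕ} (p : Idx ν) : ℝ := max 1 (max (znorm p.1) (znorm p.2))

/-- `⟨ℓ⟩ := max {1, |ℓ|}`. -/
noncomputable def bwt {n : ℕ} (ℓ : Fin n → ℤ) : ℝ := max 1 (znorm ℓ)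

noncomputable def ωdot {n : ℕ} (ω : Fin n → ℝ) (ℓ : Fin n → ℤ) : ℝ := ∑ i, ω i * (ℓ i : ℝ)

noncomputable def mdot (m : Fin 2 → ℝ) (j : Z2) : ℝ := ∑ k, m k * (j k : ℝ)

/-- `π^⊤(ℓ) = ∑ k, ℓ k • j̄ k`. -/
def piT {ν : ℕ} (jb : Fin ν → Z2) (ℓ : Zn ν) : Z2 := fun k => ∑ i, ℓ i * jb i k

/-- `π(ς) = (j̄ 1 · ς, …, j̄ ν · ς)`. -/
noncomputable def piMap {ν : ℕ} (jb : Fin ν → Z2) (ς : Fin 2 → ℝ) : Fin ν → ℝ :=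
  fun i => ∑ k, (jb i k : ℝ) * ς k

/-- The wave vectors `j̄ 1, …, j̄ ν` span `ℝ²`. -/
def SpanningWaveVectors {ν : ℕ} (jb : Fin ν → Z2) : Prop :=
  ∃ i i' : Fin ν, jb i 0 * jb i' 1 - jb i 1 * jb i' 0 ≠ 0

/-- Quasi-periodic traveling wave, in Fourier coefficients:
`û(ℓ,j) = 0` whenever `π^⊤(ℓ) + j ≠ 0`. -/
def IsQPTW {ν : ℕ} (jb : Fin ν → Z2) (u : Idx ν → ℂ) : Prop :=
  ∀ p : Idx ν, piT jb p.1 + p.2 ≠ 0 → u p = 0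

/-- Zero average in `x`: the Fourier coefficients `û(ℓ,0)` vanish. -/
def ZeroAvgX {ν : ℕ} (u : Idx ν → ℂ) : Prop := ∀ ℓ : Zn ν, u (ℓ, 0) = 0

/-- Real-valuedness in Fourier coefficients. -/
def RealCoeff {ν : ℕ} (u : Idx ν → ℂ) : Prop :=
  ∀ p : Idx ν, u (-p.1, -p.2) = starRingEnd ℂ (u p)

/-- Sobolev norm `‖u‖_s` (as an extended real). -/
noncomputable def sobNorm {ν : ℕ} {E : Type*} [SeminormedAddCommGroup E]
    (s : ℝ) (u : Idx ν → E) : ℝ≥0∞ :=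
  (∑' p : Idx ν, ENNReal.ofReal (wt p ^ (2 * s)) * ((‖u p‖₊ : ℝ≥0∞)) ^ 2) ^ (1/2 : ℝ)

/-- `C^∞` smoothness = rapid decay of the Fourier coefficients. -/
def SmoothCoeff {ν : ℕ} (u : Idx ν → ℂ) : Prop := ∀ s : ℝ, sobNorm s u < ⊤

/-- Weighted (Lipschitz in the parameter `ω ∈ Λ`) Sobolev norm `‖u‖_s^{Lip(γ)}`. -/
noncomputable def sobNormLip {ν : ℕ} {E : Type*} [SeminormedAddCommGroup E]
    (γ : ℝ) (Λ : Set (Fin ν → ℝ)) (s : ℝ) (u : (Fin ν → ℝ) → Idx ν → E) : ℝ≥0∞ :=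
  (⨆ ω ∈ Λ, sobNorm s (u ω)) +
    ENNReal.ofReal γ * ⨆ ω₁ ∈ Λ, ⨆ ω₂ ∈ Λ,
      sobNorm (s - 1) (fun p => u ω₁ p - u ω₂ p) / ENNReal.ofReal (rnorm (ω₁ - ω₂))

/-- Symbol of `𝙻 = (−Δ)^{−1} ∂_{x₁}`. -/
noncomputable def Lfreq (j : Z2) : ℝ := if j = 0 then 0 else (j 0 : ℝ) / (znorm j) ^ 2

/-- The operator `𝙻 = (−Δ)^{−1} ∂_{x₁}` in Fourier coefficients. -/
noncomputable def Lsymb {ν : ℕ} (v : Idx ν → ℂ) : Idx ν → ℂ :=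
  fun p => Complex.I * (Lfreq p.2 : ℂ) * v p

/-- The operator `ω·∂_φ` in Fourier coefficients. -/
noncomputable def phiDer {ν : ℕ} (ω : Fin ν → ℝ) (v : Idx ν → ℂ) : Idx ν → ℂ :=
  fun p => Complex.I * ((ωdot ω p.1 : ℝ) : ℂ) * v p

/-- `B(j') ⋅ (i j'')` where `B(j') = (i/|j'|²)(−j'₂, j'₁)` is the Biot-Savart symbol. -/
noncomputable def bsDot (j' j'' : Z2) : ℂ :=
  if j' = 0 then 0
  else -((((-(j' 1 : ℝ)) * (j'' 0 : ℝ) + (j' 0 : ℝ) * (j'' 1 : ℝ)) / (znorm j') ^ 2 : ℝ) : ℂ)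

/-- Fourier coefficients of the nonlinearity `B[v]·∇w` (`B` the Biot-Savart operator). -/
noncomputable def nonlin {ν : ℕ} (v w : Idx ν → ℂ) : Idx ν → ℂ :=
  fun p => ∑' q : Idx ν, bsDot q.2 (p.2 - q.2) * v q * w (p.1 - q.1, p.2 - q.2)

/-- Fourier coefficients of the (vector valued) Biot-Savart velocity field `B[v]`. -/
noncomputable def biotSavartV {ν : ℕ} (v : Idx ν → ℂ) : Idx ν → Fin 2 → ℂ :=
  fun p k => if p.2 = 0 then 0 else
    Complex.I * ((((if k = 0 then -(p.2 1) else p.2 0 : ℤ) : ℝ) / (znorm p.2) ^ 2 : ℝ) : ℂ) * v p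

/-- The reference annulus `Ω := {1 ≤ |ω| ≤ 2}`. -/
def OmegaSet (ν : ℕ) : Set (Fin ν → ℝ) := {ω | 1 ≤ rnorm ω ∧ rnorm ω ≤ 2}

/-- Diophantine vectors `DC(γ,τ)`. -/
def DCset (ν : ℕ) (γ τ : ℝ) : Set (Fin ν → ℝ) :=
  {ω ∈ OmegaSet ν | ∀ ℓ : Zn ν, ℓ ≠ 0 → γ * bwt ℓ ^ (-τ) ≤ |ωdot ω ℓ|}

/-- The set `Ω_γ` of first order Melnikov non-resonance conditions. -/
def MelnikovSet {ν : ℕ} (jb : Fin ν → Z2) (β lam γ τ : ℝ) : Set (Fin ν → ℝ) :=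
  {ω ∈ DCset ν γ τ | ∀ (ℓ : Zn ν) (j : Z2), (ℓ, j) ≠ (0, 0) → piT jb ℓ + j = 0 →
    lam * γ * bwt ℓ ^ (-τ) ≤ |lam * ωdot ω ℓ + β * Lfreq j|}

/-- Matrix representation `R̂(ℓ)_j^{j'}` of (φ-dependent families of) linear operators. -/
abbrev OpMat (ν : ℕ) := Zn ν → Z2 → Z2 → ℂ

/-- The decay norm `|R|_{m,s}`. -/
noncomputable def decayNorm {ν : ℕ} (m s : ℝ) (R : OpMat ν) : ℝ≥0∞ :=
  ⨆ j' : Z2, ENNReal.ofReal (bwt j' ^ (-m)) *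
    (∑' q : Idx ν, ENNReal.ofReal (wt (q.1, q.2 - j') ^ (2 * s)) *
      ((‖R q.1 q.2 j'‖₊ : ℝ≥0∞)) ^ 2) ^ (1/2 : ℝ)

/-- The weighted decay norm `|R|_{m,s}^{Lip(γ)}` of a family `R(ω)`, `ω ∈ Λ`. -/
noncomputable def decayNormLip {ν : ℕ} (γ : ℝ) (Λ : Set (Fin ν → ℝ)) (m s : ℝ)
    (R : (Fin ν → ℝ) → OpMat ν) : ℝ≥0∞ :=
  (⨆ ω ∈ Λ, decayNorm m s (R ω)) +
    ENNReal.ofReal γ * ⨆ ω₁ ∈ Λ, ⨆ ω₂ ∈ Λ,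
      decayNorm m (s - 1) (fun ℓ j j' => R ω₁ ℓ j j' - R ω₂ ℓ j j') /
        ENNReal.ofReal (rnorm (ω₁ - ω₂))

/-- Composition of operators at the level of matrices. -/
noncomputable def opComp {ν : ℕ} (R Q : OpMat ν) : OpMat ν :=
  fun ℓ j j' => ∑' q : Idx ν, R (ℓ - q.1) j q.2 * Q q.1 q.2 j'

/-- Action of an operator (given by its matrix) on Fourier coefficients. -/
noncomputable def opApply {ν : ℕ} (R : OpMat ν) (u : Idx ν → ℂ) : Idx ν → ℂ :=
  fun p => ∑' q : Idx ν, R (p.1 - q.1) p.2 q.2 * u q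

/-- Matrix of the identity operator. -/
noncomputable def idMat (ν : ℕ) : OpMat ν := fun ℓ j j' => if ℓ = 0 ∧ j = j' then 1 else 0

/-- Momentum preserving operator, in matrix form. -/
def MomPresMat {ν : ℕ} (jb : Fin ν → Z2) (R : OpMat ν) : Prop :=
  ∀ ℓ j j', R ℓ j j' ≠ 0 → piT jb ℓ + j = j'

/-- `n`-fold composition `R^n`. -/
noncomputable def opPow {ν : ℕ} (R : OpMat ν) : ℕ → OpMat ν
  | 0 => idMat ν
  | n + 1 => opComp R (opPow R n)

/-- Exponential `exp(R) = Id + ∑_{n ≥ 1} R^n / n!`. -/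
noncomputable def expMat {ν : ℕ} (R : OpMat ν) : OpMat ν :=
  fun ℓ j j' => idMat ν ℓ j j' +
    ∑' n : ℕ, ((Nat.factorial (n + 1) : ℂ))⁻¹ * opPow R (n + 1) ℓ j j'


/-- The inverse `L_∞⁻¹` of the final diagonal normal form `λ ω·∂_φ + D_∞`, acting on
quasi-periodic traveling waves with zero average in `x`. -/
noncomputable def LinfInv {ν : ℕ} (jb : Fin ν → Z2) (lam : ℝ) (ω : Fin ν → ℝ)
    (μ : Z2 → ℂ) (h : Idx ν → ℂ) : Idx ν → ℂ :=
  fun p => if p.1 ≠ 0 ∧ p.2 ≠ 0 ∧ piT jb p.1 + p.2 = 0 then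
    h p / (Complex.I * (((lam * ωdot ω p.1 : ℝ)) : ℂ) + μ p.2)
  else 0

/-- The set `Λ_∞^γ` of first order Melnikov conditions for the final eigenvalues. -/
def LambdaInfSet {ν : ℕ} (jb : Fin ν → Z2) (lam γ τ : ℝ)
    (μ : (Fin ν → ℝ) → Z2 → ℂ) : Set (Fin ν → ℝ) :=
  {ω ∈ DCset ν (2 * γ) τ | ∀ (ℓ : Zn ν) (j : Z2), j ≠ 0 → piT jb ℓ + j = 0 →
    2 * lam * γ * bwt ℓ ^ (-τ)
      ≤ ‖Complex.I * (((lam * ωdot ω ℓ : ℝ)) : ℂ) + μ ω j‖}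


/-! ### Auxiliary lemmas -/

lemma znorm_nonneg {n : ℕ} (ℓ : Fin n → ℤ) : 0 ≤ znorm ℓ := Real.sqrt_nonneg _

lemma one_le_znorm {n : ℕ} {ℓ : Fin n → ℤ} (h : ℓ ≠ 0) : 1 ≤ znorm ℓ := by
  obtain ⟨i, hi⟩ := Function.ne_iff.mp h
  have h1 : (1:ℝ) ≤ ((ℓ i : ℝ)) ^ 2 := by
    have h2 : (1:ℤ) ≤ |ℓ i| := Int.one_le_abs (by simpa using hi)
    have h3 : (1:ℝ) ≤ |(ℓ i : ℝ)| := by exact_mod_cast (by simpa using h2)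
    nlinarith [sq_abs ((ℓ i : ℝ))]
  have h2 : (1:ℝ) ≤ ∑ k, ((ℓ k : ℝ)) ^ 2 :=
    le_trans h1 (Finset.single_le_sum (f := fun k => ((ℓ k : ℝ)) ^ 2)
      (fun k _ => sq_nonneg _) (Finset.mem_univ i))
  exact Real.one_le_sqrt.mpr h2

lemma one_le_bwt {n : ℕ} (ℓ : Fin n → ℤ) : (1:ℝ) ≤ bwt ℓ := le_max_left _ _
lemma bwt_pos {n : ℕ} (ℓ : Fin n → ℤ) : (0:ℝ) < bwt ℓ := lt_of_lt_of_le one_pos (one_le_bwt ℓ)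
lemma one_le_wt {ν : ℕ} (p : Idx ν) : (1:ℝ) ≤ wt p := le_max_left _ _
lemma wt_pos {ν : ℕ} (p : Idx ν) : (0:ℝ) < wt p := lt_of_lt_of_le one_pos (one_le_wt p)
lemma bwt_le_wt {ν : ℕ} (p : Idx ν) : bwt p.1 ≤ wt p :=
  max_le_max le_rfl (le_max_left _ _)
lemma znorm_le_wt {ν : ℕ} (p : Idx ν) : znorm p.1 ≤ wt p :=
  le_trans (le_max_left _ (znorm p.2)) (le_max_right 1 _)

lemma rpow_wt_mono {x y a b : ℝ} (hx : 1 ≤ x) (hxy : x ≤ y) (ha : 0 ≤ a) (hab : a ≤ b) :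
    x ^ a ≤ y ^ b :=
  le_trans (Real.rpow_le_rpow (by linarith) hxy ha)
    (Real.rpow_le_rpow_of_exponent_le (le_trans hx hxy) hab)

lemma abs_ωdot_le {n : ℕ} (v : Fin n → ℝ) (ℓ : Zn n) : |ωdot v ℓ| ≤ rnorm v * znorm ℓ := by
  have h0 : 0 ≤ rnorm v * znorm ℓ :=
    mul_nonneg (Real.sqrt_nonneg _) (Real.sqrt_nonneg _)
  have hsq : (ωdot v ℓ) ^ 2 ≤ (rnorm v * znorm ℓ) ^ 2 := by
    rw [mul_pow, rnorm, znorm, Real.sq_sqrt (by positivity), Real.sq_sqrt (by positivity)]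
    exact Finset.sum_mul_sq_le_sq_mul_sq Finset.univ v (fun i => (ℓ i : ℝ))
  calc |ωdot v ℓ| = Real.sqrt ((ωdot v ℓ) ^ 2) := (Real.sqrt_sq_eq_abs _).symm
    _ ≤ Real.sqrt ((rnorm v * znorm ℓ) ^ 2) := Real.sqrt_le_sqrt hsq
    _ = rnorm v * znorm ℓ := Real.sqrt_sq h0

lemma rnorm_nonneg {n : ℕ} (v : Fin n → ℝ) : 0 ≤ rnorm v := Real.sqrt_nonneg _

lemma rnorm_sub_comm {n : ℕ} (a b : Fin n → ℝ) : rnorm (a - b) = rnorm (b - a) := by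
  unfold rnorm
  congr 1
  refine Finset.sum_congr rfl fun i _ => ?_
  simp only [Pi.sub_apply]
  ring

lemma ωdot_sub {n : ℕ} (a b : Fin n → ℝ) (ℓ : Zn n) :
    ωdot a ℓ - ωdot b ℓ = ωdot (a - b) ℓ := by
  unfold ωdot
  rw [← Finset.sum_sub_distrib]
  refine Finset.sum_congr rfl fun i _ => ?_
  simp only [Pi.sub_apply]
  ring

lemma piT_zero {ν : ℕ} (jb : Fin ν → Z2) : piT jb 0 = 0 := by
  funext k; simp [piT]

lemma term_eq {ν : ℕ} (p : Idx ν) {c a : ℝ} (hc : 0 ≤ c) (s : ℝ) (y : ℂ) :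
    ENNReal.ofReal (wt p ^ (2*s)) * (ENNReal.ofReal (c * wt p ^ a * ‖y‖)) ^ 2
      = ENNReal.ofReal (c ^ 2) *
        (ENNReal.ofReal (wt p ^ (2*(s+a))) * ((‖y‖₊ : ℝ≥0∞)) ^ 2) := by
  have hw : (0:ℝ) < wt p := wt_pos p
  rw [← ENNReal.ofReal_pow (by positivity), ← ENNReal.ofReal_mul (by positivity)]
  rw [← (show ∀ z : ℂ, ENNReal.ofReal ‖z‖ = (‖z‖₊ : ℝ≥0∞) from fun z => ofReal_norm z), ← ENNReal.ofReal_pow (norm_nonneg _),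
    ← ENNReal.ofReal_mul (by positivity), ← ENNReal.ofReal_mul (by positivity)]
  congr 1
  have key : wt p ^ (2*s) * (wt p ^ a) ^ 2 = wt p ^ (2*(s+a)) := by
    rw [sq, ← Real.rpow_add hw, ← Real.rpow_add hw]
    congr 1; ring
  have expand : wt p ^ (2*s) * (c * wt p ^ a * ‖y‖) ^ 2
      = (wt p ^ (2*s) * (wt p ^ a) ^ 2) * (c ^ 2 * ‖y‖ ^ 2) := by ring
  rw [expand, key]; ring

lemma term_le {ν : ℕ} (p : Idx ν) {c a : ℝ} (hc : 0 ≤ c) (s : ℝ) {x y : ℂ}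
    (hxy : ‖x‖ ≤ c * wt p ^ a * ‖y‖) :
    ENNReal.ofReal (wt p ^ (2*s)) * ((‖x‖₊ : ℝ≥0∞)) ^ 2
      ≤ ENNReal.ofReal (c ^ 2) *
        (ENNReal.ofReal (wt p ^ (2*(s+a))) * ((‖y‖₊ : ℝ≥0∞)) ^ 2) := by
  rw [← term_eq p hc s y]
  gcongr
  rw [← (show ∀ z : ℂ, ENNReal.ofReal ‖z‖ = (‖z‖₊ : ℝ≥0∞) from fun z => ofReal_norm z)]
  exact ENNReal.ofReal_le_ofReal hxy

lemma rpow_half_sq (x : ℝ≥0∞) : (x ^ 2) ^ (1/2 : ℝ) = x := by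
  rw [← ENNReal.rpow_natCast x 2, ← ENNReal.rpow_mul]
  norm_num

lemma sobNorm_le_of_bound {ν : ℕ} {c a : ℝ} (hc : 0 ≤ c) (s : ℝ) (u v : Idx ν → ℂ)
    (h : ∀ p, ‖u p‖ ≤ c * wt p ^ a * ‖v p‖) :
    sobNorm s u ≤ ENNReal.ofReal c * sobNorm (s + a) v := by
  unfold sobNorm
  have hsum : ∑' p : Idx ν, ENNReal.ofReal (wt p ^ (2*s)) * ((‖u p‖₊ : ℝ≥0∞)) ^ 2
      ≤ ENNReal.ofReal (c ^ 2) *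
        ∑' p : Idx ν, ENNReal.ofReal (wt p ^ (2*(s+a))) * ((‖v p‖₊ : ℝ≥0∞)) ^ 2 := by
    rw [← ENNReal.tsum_mul_left]
    exact ENNReal.tsum_le_tsum fun p => term_le p hc s (h p)
  calc (∑' p : Idx ν, ENNReal.ofReal (wt p ^ (2*s)) * ((‖u p‖₊ : ℝ≥0∞)) ^ 2) ^ (1/2 : ℝ)
      ≤ (ENNReal.ofReal (c ^ 2) *
          ∑' p : Idx ν, ENNReal.ofReal (wt p ^ (2*(s+a))) * ((‖v p‖₊ : ℝ≥0∞)) ^ 2) ^ (1/2 : ℝ) :=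
        ENNReal.rpow_le_rpow hsum (by norm_num)
    _ = ENNReal.ofReal c *
        (∑' p : Idx ν, ENNReal.ofReal (wt p ^ (2*(s+a))) * ((‖v p‖₊ : ℝ≥0∞)) ^ 2) ^ (1/2 : ℝ) := by
        rw [ENNReal.mul_rpow_of_nonneg _ _ (by norm_num : (0:ℝ) ≤ 1/2)]
        congr 1
        rw [ENNReal.ofReal_pow hc]
        exact rpow_half_sq _

lemma sobNorm_mono {ν : ℕ} {s t : ℝ} (hst : s ≤ t) (u : Idx ν → ℂ) :
    sobNorm s u ≤ sobNorm t u := by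
  have h := sobNorm_le_of_bound (c := 1) (a := t - s) zero_le_one s u u (fun p => by
    rw [one_mul]
    have h1 : (1:ℝ) ≤ wt p ^ (t - s) :=
      Real.one_le_rpow (one_le_wt p) (by linarith)
    nlinarith [norm_nonneg (u p)])
  rw [ENNReal.ofReal_one, one_mul, show s + (t - s) = t from by ring] at h
  exact h

lemma sq_add_le_ennreal (x y : ℝ≥0∞) : (x + y) ^ 2 ≤ 4 * x ^ 2 + 4 * y ^ 2 := by
  rcases le_total x y with hxy | hxy
  · calc (x + y) ^ 2 ≤ (y + y) ^ 2 := by gcongr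
      _ = 4 * y ^ 2 := by ring
      _ ≤ 4 * x ^ 2 + 4 * y ^ 2 := le_add_self
  · calc (x + y) ^ 2 ≤ (x + x) ^ 2 := by gcongr
      _ = 4 * x ^ 2 := by ring
      _ ≤ 4 * x ^ 2 + 4 * y ^ 2 := le_self_add

lemma sobNorm_le_of_bound₂ {ν : ℕ} {c₁ c₂ a b : ℝ} (hc₁ : 0 ≤ c₁) (hc₂ : 0 ≤ c₂) (s : ℝ)
    (u v w : Idx ν → ℂ)
    (h : ∀ p, ‖u p‖ ≤ c₁ * wt p ^ a * ‖v p‖ + c₂ * wt p ^ b * ‖w p‖) :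
    sobNorm s u ≤ 2 * (ENNReal.ofReal c₁ * sobNorm (s + a) v)
      + 2 * (ENNReal.ofReal c₂ * sobNorm (s + b) w) := by
  unfold sobNorm
  set A := ∑' p : Idx ν, ENNReal.ofReal (wt p ^ (2*(s+a))) * ((‖v p‖₊ : ℝ≥0∞)) ^ 2 with hA
  set B := ∑' p : Idx ν, ENNReal.ofReal (wt p ^ (2*(s+b))) * ((‖w p‖₊ : ℝ≥0∞)) ^ 2 with hB
  have hterm : ∀ p : Idx ν, ENNReal.ofReal (wt p ^ (2*s)) * ((‖u p‖₊ : ℝ≥0∞)) ^ 2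
      ≤ 4 * (ENNReal.ofReal (c₁ ^ 2) *
          (ENNReal.ofReal (wt p ^ (2*(s+a))) * ((‖v p‖₊ : ℝ≥0∞)) ^ 2))
        + 4 * (ENNReal.ofReal (c₂ ^ 2) *
          (ENNReal.ofReal (wt p ^ (2*(s+b))) * ((‖w p‖₊ : ℝ≥0∞)) ^ 2)) := by
    intro p
    have h1 : ((‖u p‖₊ : ℝ≥0∞))
        ≤ ENNReal.ofReal (c₁ * wt p ^ a * ‖v p‖) + ENNReal.ofReal (c₂ * wt p ^ b * ‖w p‖) := by
      rw [← ENNReal.ofReal_add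
          (mul_nonneg (mul_nonneg hc₁ (Real.rpow_nonneg (wt_pos p).le a)) (norm_nonneg _))
          (mul_nonneg (mul_nonneg hc₂ (Real.rpow_nonneg (wt_pos p).le b)) (norm_nonneg _)),
        ← (show ∀ z : ℂ, ENNReal.ofReal ‖z‖ = (‖z‖₊ : ℝ≥0∞) from fun z => ofReal_norm z)]
      exact ENNReal.ofReal_le_ofReal (h p)
    calc ENNReal.ofReal (wt p ^ (2*s)) * ((‖u p‖₊ : ℝ≥0∞)) ^ 2
        ≤ ENNReal.ofReal (wt p ^ (2*s)) *
            (ENNReal.ofReal (c₁ * wt p ^ a * ‖v p‖) + ENNReal.ofReal (c₂ * wt p ^ b * ‖w p‖)) ^ 2 := by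
          gcongr
      _ ≤ ENNReal.ofReal (wt p ^ (2*s)) *
            (4 * (ENNReal.ofReal (c₁ * wt p ^ a * ‖v p‖)) ^ 2
              + 4 * (ENNReal.ofReal (c₂ * wt p ^ b * ‖w p‖)) ^ 2) := by
          gcongr
          exact sq_add_le_ennreal _ _
      _ = 4 * (ENNReal.ofReal (wt p ^ (2*s)) * (ENNReal.ofReal (c₁ * wt p ^ a * ‖v p‖)) ^ 2)
          + 4 * (ENNReal.ofReal (wt p ^ (2*s)) * (ENNReal.ofReal (c₂ * wt p ^ b * ‖w p‖)) ^ 2) := by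
          ring
      _ = _ := by rw [term_eq p hc₁ s (v p), term_eq p hc₂ s (w p)]
  have hsum : ∑' p : Idx ν, ENNReal.ofReal (wt p ^ (2*s)) * ((‖u p‖₊ : ℝ≥0∞)) ^ 2
      ≤ 4 * (ENNReal.ofReal (c₁ ^ 2) * A) + 4 * (ENNReal.ofReal (c₂ ^ 2) * B) := by
    calc _ ≤ ∑' p : Idx ν, (4 * (ENNReal.ofReal (c₁ ^ 2) *
          (ENNReal.ofReal (wt p ^ (2*(s+a))) * ((‖v p‖₊ : ℝ≥0∞)) ^ 2))
        + 4 * (ENNReal.ofReal (c₂ ^ 2) *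
          (ENNReal.ofReal (wt p ^ (2*(s+b))) * ((‖w p‖₊ : ℝ≥0∞)) ^ 2))) :=
        ENNReal.tsum_le_tsum hterm
      _ = _ := by
        rw [ENNReal.tsum_add, ENNReal.tsum_mul_left, ENNReal.tsum_mul_left,
          ENNReal.tsum_mul_left, ENNReal.tsum_mul_left]
  have h4 : ((4:ℝ≥0∞)) ^ (1/2:ℝ) = 2 := by
    rw [show (4:ℝ≥0∞) = 2^2 from by norm_num]
    exact rpow_half_sq 2
  calc (∑' p : Idx ν, ENNReal.ofReal (wt p ^ (2*s)) * ((‖u p‖₊ : ℝ≥0∞)) ^ 2) ^ (1/2:ℝ)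
      ≤ (4 * (ENNReal.ofReal (c₁ ^ 2) * A) + 4 * (ENNReal.ofReal (c₂ ^ 2) * B)) ^ (1/2:ℝ) :=
        ENNReal.rpow_le_rpow hsum (by norm_num)
    _ ≤ (4 * (ENNReal.ofReal (c₁ ^ 2) * A)) ^ (1/2:ℝ)
        + (4 * (ENNReal.ofReal (c₂ ^ 2) * B)) ^ (1/2:ℝ) :=
        ENNReal.rpow_add_le_add_rpow _ _ (by norm_num) (by norm_num)
    _ = 2 * (ENNReal.ofReal c₁ * A ^ (1/2:ℝ)) + 2 * (ENNReal.ofReal c₂ * B ^ (1/2:ℝ)) := by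
        rw [ENNReal.mul_rpow_of_nonneg _ _ (by norm_num : (0:ℝ) ≤ 1/2),
          ENNReal.mul_rpow_of_nonneg _ _ (by norm_num : (0:ℝ) ≤ 1/2),
          ENNReal.mul_rpow_of_nonneg _ _ (by norm_num : (0:ℝ) ≤ 1/2),
          ENNReal.mul_rpow_of_nonneg _ _ (by norm_num : (0:ℝ) ≤ 1/2),
          h4, ENNReal.ofReal_pow hc₁, ENNReal.ofReal_pow hc₂, rpow_half_sq, rpow_half_sq]

set_option maxHeartbeats 2000000 in
/-- Lemma 7.1 of the paper: for `ω ∈ Λ_∞^γ` the operator `L_∞⁻¹`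
produces quasi-periodic traveling waves, inverts `λ ω·∂_φ + D_∞`, and satisfies
`‖L_∞⁻¹ h‖_s ≤ C' λ⁻¹ γ⁻¹ ‖h‖_{s+τ}` pointwise in `ω` and
`‖L_∞⁻¹ h‖_s^{Lip(γ)} ≤ C' λ⁻¹ γ⁻¹ ‖h‖_{s+2τ+1}^{Lip(γ)}` for families. -/
theorem final_normal_form_inversion
    {ν : ℕ} (hν : 2 ≤ ν) (jb : Fin ν → Z2) (hjb : SpanningWaveVectors jb)
    (τ γ lam β θ : ℝ)
    (hτ : (ν : ℝ) - 1 < τ) (hγ₀ : 0 < γ) (hγ₁ : γ < 1) (hlam : 1 ≤ lam)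
    (hθ : θ < 1) (hsmall : lam ^ (θ - 1) * γ⁻¹ ≤ 1)
    (C₁ : ℝ) (hC₁ : 0 < C₁)
    (μ : (Fin ν → ℝ) → Z2 → ℂ) (z : (Fin ν → ℝ) → Z2 → ℂ)
    (hμ : ∀ ω (j : Z2), μ ω j = Complex.I * (β : ℂ) * ((Lfreq j : ℝ) : ℂ) + z ω j)
    (hz_sup : ∀ ω ∈ DCset ν (2 * γ) τ, ∀ j : Z2, j ≠ 0 →
      ‖z ω j‖ ≤ C₁ * lam ^ θ * (znorm j)⁻¹)
    (hz_lip : ∀ ω₁ ∈ DCset ν (2 * γ) τ, ∀ ω₂ ∈ DCset ν (2 * γ) τ, ∀ j : Z2, j ≠ 0 →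
      ‖z ω₁ j - z ω₂ j‖ ≤ C₁ * lam ^ θ * γ⁻¹ * (znorm j)⁻¹ * rnorm (ω₁ - ω₂)) :
    ∃ C' : ℝ, 0 < C' ∧
      -- pointwise (in `ω`) statements
      (∀ ω ∈ LambdaInfSet jb lam γ τ μ, ∀ h : Idx ν → ℂ,
        IsQPTW jb h → ZeroAvgX h →
          IsQPTW jb (LinfInv jb lam ω (μ ω) h) ∧
          ZeroAvgX (LinfInv jb lam ω (μ ω) h) ∧
          -- `(λ ω·∂_φ + D_∞)(L_∞⁻¹ h) = h`
          (∀ p : Idx ν,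
            Complex.I * (((lam * ωdot ω p.1 : ℝ)) : ℂ) * LinfInv jb lam ω (μ ω) h p
              + μ ω p.2 * LinfInv jb lam ω (μ ω) h p = h p) ∧
          -- `‖L_∞⁻¹ h‖_s ≤ C' λ⁻¹ γ⁻¹ ‖h‖_{s+τ}`
          (∀ s : ℝ, 0 ≤ s →
            sobNorm s (LinfInv jb lam ω (μ ω) h)
              ≤ ENNReal.ofReal (C' * lam⁻¹ * γ⁻¹) * sobNorm (s + τ) h)) ∧
      -- statement for families `h(·;ω)`
      (∀ h : (Fin ν → ℝ) → Idx ν → ℂ,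
        (∀ ω ∈ LambdaInfSet jb lam γ τ μ, IsQPTW jb (h ω) ∧ ZeroAvgX (h ω)) →
        ∀ s : ℝ, 0 ≤ s →
          sobNormLip γ (LambdaInfSet jb lam γ τ μ) s
              (fun ω => LinfInv jb lam ω (μ ω) (h ω))
            ≤ ENNReal.ofReal (C' * lam⁻¹ * γ⁻¹) *
                sobNormLip γ (LambdaInfSet jb lam γ τ μ) (s + 2 * τ + 1) h) := by
  classical
  have hlam0 : (0:ℝ) < lam := lt_of_lt_of_le one_pos hlam
  have hν1 : (2:ℝ) ≤ (ν:ℝ) := by exact_mod_cast hν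
  have hτ0 : (0:ℝ) ≤ τ := by linarith
  have hinv0 : (0:ℝ) ≤ lam⁻¹ * γ⁻¹ :=
    mul_nonneg (inv_nonneg.mpr hlam0.le) (inv_nonneg.mpr hγ₀.le)
  set Λ := LambdaInfSet jb lam γ τ μ with hΛdef
  -- inverse denominator bound
  have hden : ∀ ω ∈ Λ, ∀ p : Idx ν, p.2 ≠ 0 → piT jb p.1 + p.2 = 0 →
      ‖Complex.I * (((lam * ωdot ω p.1 : ℝ)) : ℂ) + μ ω p.2‖⁻¹
        ≤ (2*lam*γ)⁻¹ * wt p ^ τ := by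
    intro ω hω p hj hmom
    have hmel := hω.2 p.1 p.2 hj hmom
    have hb1 : (0:ℝ) < bwt p.1 ^ (-τ) := Real.rpow_pos_of_pos (bwt_pos _) _
    have hw1 : (0:ℝ) < wt p ^ (-τ) := Real.rpow_pos_of_pos (wt_pos _) _
    have hbw : wt p ^ (-τ) ≤ bwt p.1 ^ (-τ) := by
      rw [Real.rpow_neg (wt_pos p).le, Real.rpow_neg (bwt_pos _).le]
      have h1 : bwt p.1 ^ τ ≤ wt p ^ τ :=
        Real.rpow_le_rpow (bwt_pos _).le (bwt_le_wt p) hτ0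
      have h2 : (0:ℝ) < bwt p.1 ^ τ := Real.rpow_pos_of_pos (bwt_pos _) _
      exact inv_anti₀ h2 h1
    have he : (0:ℝ) < 2*lam*γ*wt p ^ (-τ) := by
      have : (0:ℝ) < 2*lam*γ := by positivity
      exact mul_pos this hw1
    have hden' : 2*lam*γ*wt p ^ (-τ)
        ≤ ‖Complex.I * (((lam * ωdot ω p.1 : ℝ)) : ℂ) + μ ω p.2‖ := by
      refine le_trans ?_ hmel
      have : (0:ℝ) ≤ 2*lam*γ := by positivity
      exact mul_le_mul_of_nonneg_left hbw this
    have := inv_anti₀ he hden'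
    refine le_trans this ?_
    rw [mul_inv, Real.rpow_neg (wt_pos p).le, inv_inv]
  -- nonvanishing of the denominator
  have hdnz : ∀ ω ∈ Λ, ∀ p : Idx ν, p.2 ≠ 0 → piT jb p.1 + p.2 = 0 →
      Complex.I * (((lam * ωdot ω p.1 : ℝ)) : ℂ) + μ ω p.2 ≠ 0 := by
    intro ω hω p hj hmom h0
    have hmel := hω.2 p.1 p.2 hj hmom
    rw [h0, norm_zero] at hmel
    have hb1 : (0:ℝ) < bwt p.1 ^ (-τ) := Real.rpow_pos_of_pos (bwt_pos _) _
    nlinarith [mul_pos (mul_pos (mul_pos two_pos hlam0) hγ₀) hb1]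
  -- basic pointwise bound
  have hbound : ∀ ω ∈ Λ, ∀ (h : Idx ν → ℂ) (p : Idx ν),
      ‖LinfInv jb lam ω (μ ω) h p‖ ≤ (lam⁻¹*γ⁻¹) * wt p ^ τ * ‖h p‖ := by
    intro ω hω h p
    have hwτ : (0:ℝ) ≤ wt p ^ τ := (Real.rpow_pos_of_pos (wt_pos p) τ).le
    unfold LinfInv
    split_ifs with hcond
    · obtain ⟨h1, h2, h3⟩ := hcond
      have hd := hden ω hω p h2 h3
      have h2l : (2*lam*γ)⁻¹ ≤ lam⁻¹*γ⁻¹ := by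
        rw [mul_inv, mul_inv]
        have hl : (0:ℝ) ≤ lam⁻¹ := inv_nonneg.mpr hlam0.le
        have hg : (0:ℝ) ≤ γ⁻¹ := inv_nonneg.mpr hγ₀.le
        nlinarith
      calc ‖h p / (Complex.I * (((lam * ωdot ω p.1 : ℝ)) : ℂ) + μ ω p.2)‖
          = ‖h p‖ * ‖Complex.I * (((lam * ωdot ω p.1 : ℝ)) : ℂ) + μ ω p.2‖⁻¹ := by
            rw [norm_div, div_eq_mul_inv]
        _ ≤ ‖h p‖ * ((2*lam*γ)⁻¹ * wt p ^ τ) :=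
            mul_le_mul_of_nonneg_left hd (norm_nonneg _)
        _ ≤ (lam⁻¹*γ⁻¹) * wt p ^ τ * ‖h p‖ := by
            nlinarith [norm_nonneg (h p), mul_nonneg (sub_nonneg.mpr h2l) hwτ,
              mul_nonneg (mul_nonneg (sub_nonneg.mpr h2l) hwτ) (norm_nonneg (h p))]
    · simp only [norm_zero]
      exact mul_nonneg (mul_nonneg hinv0 hwτ) (norm_nonneg _)
  refine ⟨8*(1+C₁), by nlinarith, ?_, ?_⟩
  · -- pointwise statements
    intro ω hω h hQ hZ
    refine ⟨?_, ?_, ?_, ?_⟩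
    · intro p hp
      simp only [LinfInv]
      rw [if_neg]
      rintro ⟨-, -, h3⟩
      exact hp h3
    · intro ℓ
      simp only [LinfInv]
      rw [if_neg]
      rintro ⟨-, h2, -⟩
      exact h2 rfl
    · intro p
      by_cases hcond : p.1 ≠ 0 ∧ p.2 ≠ 0 ∧ piT jb p.1 + p.2 = 0
      · have hdne := hdnz ω hω p hcond.2.1 hcond.2.2
        simp only [LinfInv, if_pos hcond]
        calc Complex.I * (((lam * ωdot ω p.1 : ℝ)) : ℂ)
              * (h p / (Complex.I * (((lam * ωdot ω p.1 : ℝ)) : ℂ) + μ ω p.2))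
            + μ ω p.2 * (h p / (Complex.I * (((lam * ωdot ω p.1 : ℝ)) : ℂ) + μ ω p.2))
            = h p / (Complex.I * (((lam * ωdot ω p.1 : ℝ)) : ℂ) + μ ω p.2)
              * (Complex.I * (((lam * ωdot ω p.1 : ℝ)) : ℂ) + μ ω p.2) := by ring
          _ = h p := div_mul_cancel₀ _ hdne
      · simp only [LinfInv, if_neg hcond, mul_zero, add_zero]
        by_cases hm : piT jb p.1 + p.2 = 0
        · by_cases hj : p.2 = 0
          · have hp : p = (p.1, (0:Z2)) := Prod.ext rfl hj
            rw [hp]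
            exact (hZ p.1).symm
          · have hl : p.1 = 0 := by
              by_contra hl
              exact hcond ⟨hl, hj, hm⟩
            rw [hl, piT_zero, zero_add] at hm
            exact absurd hm hj
        · exact (hQ p hm).symm
    · intro s hs
      have hC'le : ∀ p : Idx ν, ‖LinfInv jb lam ω (μ ω) h p‖
          ≤ (8*(1+C₁)*lam⁻¹*γ⁻¹) * wt p ^ τ * ‖h p‖ := by
        intro p
        refine (hbound ω hω h p).trans ?_
        have hwτ : (0:ℝ) ≤ wt p ^ τ := Real.rpow_nonneg (wt_pos p).le τ
        have hscal : lam⁻¹*γ⁻¹ ≤ 8*(1+C₁)*lam⁻¹*γ⁻¹ := by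
          nlinarith [hinv0, hC₁, mul_nonneg hC₁.le hinv0]
        exact mul_le_mul_of_nonneg_right
          (mul_le_mul_of_nonneg_right hscal hwτ) (norm_nonneg _)
      exact sobNorm_le_of_bound
        (mul_nonneg (mul_nonneg (by nlinarith) (inv_nonneg.mpr hlam0.le))
          (inv_nonneg.mpr hγ₀.le)) s _ h hC'le
  · -- families
    intro h hQZ s hs
    have hγinv0 : (0:ℝ) ≤ γ⁻¹ := inv_nonneg.mpr hγ₀.le
    have hc₂0 : (0:ℝ) ≤ (1+C₁)*(lam⁻¹*γ⁻¹*γ⁻¹) :=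
      mul_nonneg (by linarith) (mul_nonneg hinv0 hγinv0)
    -- pointwise Lipschitz bound
    have hpair : ∀ ω₁ ∈ Λ, ∀ ω₂ ∈ Λ, ∀ p : Idx ν,
        ‖LinfInv jb lam ω₁ (μ ω₁) (h ω₁) p - LinfInv jb lam ω₂ (μ ω₂) (h ω₂) p‖
          ≤ (lam⁻¹*γ⁻¹) * wt p ^ (2*τ+1) * ‖h ω₁ p - h ω₂ p‖
            + ((1+C₁)*(lam⁻¹*γ⁻¹*γ⁻¹) * rnorm (ω₁ - ω₂)) * wt p ^ (2*τ+2) * ‖h ω₂ p‖ := by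
      intro ω₁ hω₁ ω₂ hω₂ p
      have hW1 : (1:ℝ) ≤ wt p := one_le_wt p
      have hW0 : (0:ℝ) ≤ wt p := (wt_pos p).le
      have hΔ0 : (0:ℝ) ≤ rnorm (ω₁ - ω₂) := rnorm_nonneg _
      have hr0 : (0:ℝ) ≤ wt p ^ τ := Real.rpow_nonneg hW0 τ
      have hC0 : (0:ℝ) ≤ 1 + C₁ := by linarith
      have hRHS1 : (0:ℝ) ≤ (lam⁻¹*γ⁻¹) * wt p ^ (2*τ+1) * ‖h ω₁ p - h ω₂ p‖ :=
        mul_nonneg (mul_nonneg hinv0 (Real.rpow_nonneg hW0 _)) (norm_nonneg _)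
      have hRHS2 : (0:ℝ) ≤ ((1+C₁)*(lam⁻¹*γ⁻¹*γ⁻¹) * rnorm (ω₁ - ω₂)) * wt p ^ (2*τ+2)
          * ‖h ω₂ p‖ :=
        mul_nonneg (mul_nonneg (mul_nonneg hc₂0 hΔ0) (Real.rpow_nonneg hW0 _)) (norm_nonneg _)
      simp only [LinfInv]
      split_ifs with hcond
      case neg =>
        simp only [sub_zero, norm_zero]
        linarith
      obtain ⟨hl1, hj1, hm1⟩ := hcond
      set d₁ := Complex.I * (((lam * ωdot ω₁ p.1 : ℝ)) : ℂ) + μ ω₁ p.2 with hd₁def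
      set d₂ := Complex.I * (((lam * ωdot ω₂ p.1 : ℝ)) : ℂ) + μ ω₂ p.2 with hd₂def
      have hd₁nz : d₁ ≠ 0 := hdnz ω₁ hω₁ p hj1 hm1
      have hd₂nz : d₂ ≠ 0 := hdnz ω₂ hω₂ p hj1 hm1
      have hd1i : ‖d₁‖⁻¹ ≤ (2*lam*γ)⁻¹ * wt p ^ τ := hden ω₁ hω₁ p hj1 hm1
      have hd2i : ‖d₂‖⁻¹ ≤ (2*lam*γ)⁻¹ * wt p ^ τ := hden ω₂ hω₂ p hj1 hm1
      have hK20 : (0:ℝ) ≤ (2*lam*γ)⁻¹ := inv_nonneg.mpr (by positivity)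
      have hKr0 : (0:ℝ) ≤ (2*lam*γ)⁻¹ * wt p ^ τ := mul_nonneg hK20 hr0
      have h2l : (2*lam*γ)⁻¹ ≤ lam⁻¹*γ⁻¹ := by
        rw [mul_inv, mul_inv]
        nlinarith [inv_nonneg.mpr hlam0.le, hγinv0,
          mul_nonneg (inv_nonneg.mpr hlam0.le) hγinv0]
      have hrle : wt p ^ τ ≤ wt p ^ (2*τ+1) :=
        Real.rpow_le_rpow_of_exponent_le hW1 (by linarith)
      -- bound on the difference of the denominators
      have hΔd : ‖d₂ - d₁‖ ≤ (1+C₁)*lam*wt p*rnorm (ω₁ - ω₂) := by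
        have hdd : d₂ - d₁ = Complex.I * ((lam * ωdot ω₂ p.1 - lam * ωdot ω₁ p.1 : ℝ) : ℂ)
            + (z ω₂ p.2 - z ω₁ p.2) := by
          rw [hd₁def, hd₂def, hμ, hμ]
          push_cast
          ring
        have n1 : ‖Complex.I * ((lam * ωdot ω₂ p.1 - lam * ωdot ω₁ p.1 : ℝ) : ℂ)‖
            = |lam * ωdot ω₂ p.1 - lam * ωdot ω₁ p.1| := by
          rw [norm_mul, Complex.norm_I, one_mul, Complex.norm_real, Real.norm_eq_abs]
        have n1' : |lam * ωdot ω₂ p.1 - lam * ωdot ω₁ p.1|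
            ≤ lam * (rnorm (ω₁ - ω₂) * znorm p.1) := by
          rw [← mul_sub, abs_mul, abs_of_pos hlam0, ωdot_sub]
          have habs := abs_ωdot_le (ω₂ - ω₁) p.1
          rw [rnorm_sub_comm ω₂ ω₁] at habs
          exact mul_le_mul_of_nonneg_left habs hlam0.le
        have hθγ : lam ^ θ * γ⁻¹ ≤ lam := by
          have h1 : lam ^ (θ-1) * lam ^ (1:ℝ) = lam ^ θ := by
            rw [← Real.rpow_add hlam0]
            norm_num
          calc lam ^ θ * γ⁻¹ = lam * (lam ^ (θ-1) * γ⁻¹) := by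
                rw [← h1, Real.rpow_one]; ring
            _ ≤ lam * 1 := mul_le_mul_of_nonneg_left hsmall hlam0.le
            _ = lam := mul_one lam
        have hjinv : (znorm p.2)⁻¹ ≤ 1 := inv_le_one_of_one_le₀ (one_le_znorm hj1)
        have n2 : ‖z ω₂ p.2 - z ω₁ p.2‖ ≤ C₁ * lam * rnorm (ω₁ - ω₂) := by
          rw [norm_sub_rev]
          refine (hz_lip ω₁ hω₁.1 ω₂ hω₂.1 p.2 hj1).trans ?_
          calc C₁ * lam ^ θ * γ⁻¹ * (znorm p.2)⁻¹ * rnorm (ω₁ - ω₂)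
              = (C₁ * rnorm (ω₁ - ω₂)) * ((lam ^ θ * γ⁻¹) * (znorm p.2)⁻¹) := by ring
            _ ≤ (C₁ * rnorm (ω₁ - ω₂)) * (lam * 1) := by
                refine mul_le_mul_of_nonneg_left ?_ (mul_nonneg hC₁.le hΔ0)
                exact mul_le_mul hθγ hjinv (inv_nonneg.mpr (znorm_nonneg _)) hlam0.le
            _ = C₁ * lam * rnorm (ω₁ - ω₂) := by ring
        calc ‖d₂ - d₁‖
            ≤ ‖Complex.I * ((lam * ωdot ω₂ p.1 - lam * ωdot ω₁ p.1 : ℝ) : ℂ)‖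
              + ‖z ω₂ p.2 - z ω₁ p.2‖ := by rw [hdd]; exact norm_add_le _ _
          _ ≤ lam * (rnorm (ω₁ - ω₂) * znorm p.1) + C₁ * lam * rnorm (ω₁ - ω₂) :=
              add_le_add (n1.trans_le n1') n2
          _ ≤ (1+C₁)*lam*wt p*rnorm (ω₁ - ω₂) := by
              nlinarith [mul_nonneg (mul_nonneg hlam0.le hΔ0)
                  (sub_nonneg.mpr (znorm_le_wt p)),
                mul_nonneg (mul_nonneg hC₁.le hlam0.le)
                  (mul_nonneg hΔ0 (sub_nonneg.mpr hW1))]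
      have hK : lam * ((2*lam*γ)⁻¹ * (2*lam*γ)⁻¹) ≤ lam⁻¹*γ⁻¹*γ⁻¹ := by
        have he : lam * ((2*lam*γ)⁻¹ * (2*lam*γ)⁻¹) = lam⁻¹*γ⁻¹*γ⁻¹/4 := by
          field_simp
          ring
        have hnn : (0:ℝ) ≤ lam⁻¹*γ⁻¹*γ⁻¹ := mul_nonneg hinv0 hγinv0
        linarith
      have hWrr : wt p * (wt p ^ τ * wt p ^ τ) ≤ wt p ^ (2*τ+2) := by
        have e1 : wt p ^ τ * wt p ^ τ = wt p ^ (τ+τ) := (Real.rpow_add (wt_pos p) τ τ).symm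
        have e2 : wt p * wt p ^ (τ+τ) = wt p ^ (1+(τ+τ)) := by
          rw [Real.rpow_add (wt_pos p) 1 (τ+τ), Real.rpow_one]
        calc wt p * (wt p ^ τ * wt p ^ τ) = wt p ^ (1+(τ+τ)) := by rw [e1, e2]
          _ ≤ wt p ^ (2*τ+2) := Real.rpow_le_rpow_of_exponent_le hW1 (by linarith)
      have hCWΔ0 : (0:ℝ) ≤ (1+C₁)*lam*wt p*rnorm (ω₁ - ω₂) :=
        mul_nonneg (mul_nonneg (mul_nonneg hC0 hlam0.le) hW0) hΔ0
      have hsplit : h ω₁ p / d₁ - h ω₂ p / d₂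
          = (h ω₁ p - h ω₂ p)/d₁ + h ω₂ p * (d₂ - d₁)/(d₁*d₂) := by
        field_simp
        ring
      rw [hsplit]
      calc ‖(h ω₁ p - h ω₂ p)/d₁ + h ω₂ p * (d₂ - d₁)/(d₁*d₂)‖
          ≤ ‖(h ω₁ p - h ω₂ p)/d₁‖ + ‖h ω₂ p * (d₂ - d₁)/(d₁*d₂)‖ := norm_add_le _ _
        _ = ‖h ω₁ p - h ω₂ p‖ * ‖d₁‖⁻¹
            + ‖h ω₂ p‖ * ‖d₂ - d₁‖ * (‖d₁‖⁻¹ * ‖d₂‖⁻¹) := by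
            rw [norm_div, norm_div, norm_mul, norm_mul, div_eq_mul_inv, div_eq_mul_inv,
              mul_inv]
        _ ≤ ‖h ω₁ p - h ω₂ p‖ * ((2*lam*γ)⁻¹ * wt p ^ τ)
            + ‖h ω₂ p‖ * ((1+C₁)*lam*wt p*rnorm (ω₁ - ω₂))
              * (((2*lam*γ)⁻¹ * wt p ^ τ) * ((2*lam*γ)⁻¹ * wt p ^ τ)) := by
            refine add_le_add (mul_le_mul_of_nonneg_left hd1i (norm_nonneg _)) ?_
            refine mul_le_mul ?_ ?_ ?_ ?_
            · exact mul_le_mul_of_nonneg_left hΔd (norm_nonneg _)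
            · exact mul_le_mul hd1i hd2i (inv_nonneg.mpr (norm_nonneg _)) hKr0
            · exact mul_nonneg (inv_nonneg.mpr (norm_nonneg _))
                (inv_nonneg.mpr (norm_nonneg _))
            · exact mul_nonneg (norm_nonneg _) hCWΔ0
        _ ≤ (lam⁻¹*γ⁻¹) * wt p ^ (2*τ+1) * ‖h ω₁ p - h ω₂ p‖
            + ((1+C₁)*(lam⁻¹*γ⁻¹*γ⁻¹) * rnorm (ω₁ - ω₂)) * wt p ^ (2*τ+2) * ‖h ω₂ p‖ := by
            refine add_le_add ?_ ?_
            · have h1 : (2*lam*γ)⁻¹ * wt p ^ τ ≤ (lam⁻¹*γ⁻¹) * wt p ^ (2*τ+1) :=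
                mul_le_mul h2l hrle hr0 hinv0
              calc ‖h ω₁ p - h ω₂ p‖ * ((2*lam*γ)⁻¹ * wt p ^ τ)
                  ≤ ‖h ω₁ p - h ω₂ p‖ * ((lam⁻¹*γ⁻¹) * wt p ^ (2*τ+1)) :=
                    mul_le_mul_of_nonneg_left h1 (norm_nonneg _)
                _ = (lam⁻¹*γ⁻¹) * wt p ^ (2*τ+1) * ‖h ω₁ p - h ω₂ p‖ := by ring
            · calc ‖h ω₂ p‖ * ((1+C₁)*lam*wt p*rnorm (ω₁ - ω₂))
                  * (((2*lam*γ)⁻¹ * wt p ^ τ) * ((2*lam*γ)⁻¹ * wt p ^ τ))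
                  = ((1+C₁) * rnorm (ω₁ - ω₂) * ‖h ω₂ p‖)
                    * ((lam * ((2*lam*γ)⁻¹ * (2*lam*γ)⁻¹)) * (wt p * (wt p ^ τ * wt p ^ τ))) := by
                    ring
                _ ≤ ((1+C₁) * rnorm (ω₁ - ω₂) * ‖h ω₂ p‖)
                    * ((lam⁻¹*γ⁻¹*γ⁻¹) * wt p ^ (2*τ+2)) := by
                    refine mul_le_mul_of_nonneg_left ?_
                      (mul_nonneg (mul_nonneg hC0 hΔ0) (norm_nonneg _))
                    exact mul_le_mul hK hWrr (mul_nonneg hW0 (mul_nonneg hr0 hr0))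
                      (mul_nonneg hinv0 hγinv0)
                _ = ((1+C₁)*(lam⁻¹*γ⁻¹*γ⁻¹) * rnorm (ω₁ - ω₂)) * wt p ^ (2*τ+2)
                    * ‖h ω₂ p‖ := by ring
    -- assemble the weighted norm inequality
    simp only [sobNormLip]
    set S := ⨆ ω ∈ Λ, sobNorm (s + 2*τ + 1) (h ω) with hSdef
    set T := ⨆ ω₁ ∈ Λ, ⨆ ω₂ ∈ Λ,
      sobNorm (s + 2*τ + 1 - 1) (fun p => h ω₁ p - h ω₂ p)
        / ENNReal.ofReal (rnorm (ω₁ - ω₂)) with hTdef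
    have hstep1 : (⨆ ω ∈ Λ, sobNorm s (LinfInv jb lam ω (μ ω) (h ω)))
        ≤ ENNReal.ofReal (lam⁻¹*γ⁻¹) * S := by
      refine iSup₂_le fun ω hω => ?_
      refine le_trans (sobNorm_le_of_bound hinv0 s _ (h ω) (hbound ω hω (h ω))) ?_
      refine mul_le_mul_right ?_ _
      refine le_trans (sobNorm_mono (s := s + τ) (t := s + 2*τ + 1) (by linarith) (h ω)) ?_
      exact le_iSup₂ (f := fun ω (_ : ω ∈ Λ) => sobNorm (s + 2*τ + 1) (h ω)) ω hω
    have hstep2 : (⨆ ω₁ ∈ Λ, ⨆ ω₂ ∈ Λ,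
          sobNorm (s - 1) (fun p => LinfInv jb lam ω₁ (μ ω₁) (h ω₁) p
            - LinfInv jb lam ω₂ (μ ω₂) (h ω₂) p) / ENNReal.ofReal (rnorm (ω₁ - ω₂)))
        ≤ 2 * ENNReal.ofReal (lam⁻¹*γ⁻¹) * T
          + 2 * ENNReal.ofReal ((1+C₁)*(lam⁻¹*γ⁻¹*γ⁻¹)) * S := by
      refine iSup₂_le fun ω₁ hω₁ => iSup₂_le fun ω₂ hω₂ => ?_
      have hb := sobNorm_le_of_bound₂ hinv0
        (mul_nonneg hc₂0 (rnorm_nonneg (ω₁ - ω₂))) (s-1) _ _ _ (hpair ω₁ hω₁ ω₂ hω₂)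
      rw [show s - 1 + (2*τ+1) = s + 2*τ + 1 - 1 from by ring,
        show s - 1 + (2*τ+2) = s + 2*τ + 1 from by ring] at hb
      refine le_trans (ENNReal.div_le_div_right hb _) ?_
      calc (2 * (ENNReal.ofReal (lam⁻¹*γ⁻¹)
              * sobNorm (s + 2*τ + 1 - 1) (fun p => h ω₁ p - h ω₂ p))
            + 2 * (ENNReal.ofReal ((1+C₁)*(lam⁻¹*γ⁻¹*γ⁻¹) * rnorm (ω₁ - ω₂))
              * sobNorm (s + 2*τ + 1) (h ω₂)))
            / ENNReal.ofReal (rnorm (ω₁ - ω₂))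
          = 2 * ENNReal.ofReal (lam⁻¹*γ⁻¹)
              * (sobNorm (s + 2*τ + 1 - 1) (fun p => h ω₁ p - h ω₂ p)
                / ENNReal.ofReal (rnorm (ω₁ - ω₂)))
            + 2 * ENNReal.ofReal ((1+C₁)*(lam⁻¹*γ⁻¹*γ⁻¹)) * sobNorm (s + 2*τ + 1) (h ω₂)
              * (ENNReal.ofReal (rnorm (ω₁ - ω₂)) / ENNReal.ofReal (rnorm (ω₁ - ω₂))) := by
            rw [ENNReal.ofReal_mul hc₂0, div_eq_mul_inv, div_eq_mul_inv, div_eq_mul_inv,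
              add_mul]
            ring
        _ ≤ 2 * ENNReal.ofReal (lam⁻¹*γ⁻¹) * T
            + 2 * ENNReal.ofReal ((1+C₁)*(lam⁻¹*γ⁻¹*γ⁻¹)) * S := by
            refine add_le_add (mul_le_mul_right ?_ _) ?_
            · refine le_trans (le_iSup₂ (f := fun ω₂' (_ : ω₂' ∈ Λ) =>
                  sobNorm (s + 2*τ + 1 - 1) (fun p => h ω₁ p - h ω₂' p)
                    / ENNReal.ofReal (rnorm (ω₁ - ω₂'))) ω₂ hω₂) ?_
              exact le_iSup₂ (f := fun ω₁' (_ : ω₁' ∈ Λ) => ⨆ ω₂' ∈ Λ,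
                  sobNorm (s + 2*τ + 1 - 1) (fun p => h ω₁' p - h ω₂' p)
                    / ENNReal.ofReal (rnorm (ω₁' - ω₂'))) ω₁ hω₁
            · calc 2 * ENNReal.ofReal ((1+C₁)*(lam⁻¹*γ⁻¹*γ⁻¹)) * sobNorm (s + 2*τ + 1) (h ω₂)
                  * (ENNReal.ofReal (rnorm (ω₁ - ω₂)) / ENNReal.ofReal (rnorm (ω₁ - ω₂)))
                  ≤ 2 * ENNReal.ofReal ((1+C₁)*(lam⁻¹*γ⁻¹*γ⁻¹)) * sobNorm (s + 2*τ + 1) (h ω₂)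
                    * 1 := mul_le_mul_right ENNReal.div_self_le_one _
                _ = 2 * ENNReal.ofReal ((1+C₁)*(lam⁻¹*γ⁻¹*γ⁻¹))
                    * sobNorm (s + 2*τ + 1) (h ω₂) := mul_one _
                _ ≤ 2 * ENNReal.ofReal ((1+C₁)*(lam⁻¹*γ⁻¹*γ⁻¹)) * S :=
                    mul_le_mul_right
                      (le_iSup₂ (f := fun ω (_ : ω ∈ Λ) => sobNorm (s + 2*τ + 1) (h ω)) ω₂ hω₂) _
    have hcoefS : ENNReal.ofReal (lam⁻¹*γ⁻¹)
          + ENNReal.ofReal γ * (2 * ENNReal.ofReal ((1+C₁)*(lam⁻¹*γ⁻¹*γ⁻¹)))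
        ≤ ENNReal.ofReal (8*(1+C₁)*lam⁻¹*γ⁻¹) := by
      have h2 : (2:ℝ≥0∞) = ENNReal.ofReal 2 := by norm_num
      rw [h2, ← ENNReal.ofReal_mul (by norm_num), ← ENNReal.ofReal_mul hγ₀.le,
        ← ENNReal.ofReal_add hinv0]
      · apply ENNReal.ofReal_le_ofReal
        have e : γ * (2*((1+C₁)*(lam⁻¹*γ⁻¹*γ⁻¹))) = 2*(1+C₁)*(lam⁻¹*γ⁻¹) := by
          field_simp
        rw [e]
        nlinarith [hinv0, hC₁, mul_nonneg hC₁.le hinv0]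
      · exact mul_nonneg hγ₀.le (mul_nonneg (by norm_num) hc₂0)
    have hcoefT : 2 * ENNReal.ofReal (lam⁻¹*γ⁻¹) ≤ ENNReal.ofReal (8*(1+C₁)*lam⁻¹*γ⁻¹) := by
      have h2 : (2:ℝ≥0∞) = ENNReal.ofReal 2 := by norm_num
      rw [h2, ← ENNReal.ofReal_mul (by norm_num)]
      apply ENNReal.ofReal_le_ofReal
      nlinarith [hinv0, hC₁, mul_nonneg hC₁.le hinv0]
    refine le_trans (add_le_add hstep1 (mul_le_mul_right hstep2 (ENNReal.ofReal γ))) ?_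
    calc ENNReal.ofReal (lam⁻¹*γ⁻¹) * S
          + ENNReal.ofReal γ * (2 * ENNReal.ofReal (lam⁻¹*γ⁻¹) * T
            + 2 * ENNReal.ofReal ((1+C₁)*(lam⁻¹*γ⁻¹*γ⁻¹)) * S)
        = (ENNReal.ofReal (lam⁻¹*γ⁻¹)
            + ENNReal.ofReal γ * (2 * ENNReal.ofReal ((1+C₁)*(lam⁻¹*γ⁻¹*γ⁻¹)))) * S
          + (2 * ENNReal.ofReal (lam⁻¹*γ⁻¹)) * (ENNReal.ofReal γ * T) := by ring
      _ ≤ ENNReal.ofReal (8*(1+C₁)*lam⁻¹*γ⁻¹) * S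
          + ENNReal.ofReal (8*(1+C₁)*lam⁻¹*γ⁻¹) * (ENNReal.ofReal γ * T) :=
          add_le_add (mul_le_mul_left hcoefS S) (mul_le_mul_left hcoefT _)
      _ = ENNReal.ofReal (8*(1+C₁)*lam⁻¹*γ⁻¹) * (S + ENNReal.ofReal γ * T) :=
          (mul_add _ _ _).symm

end BetaPlane
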